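/- Let G:(0,∞)→(0,∞) be a continuous nondecreasing function satisfying the Δ₂ condition at infinity. Then the following are equivalent: (i) for every K≥1, limsup_{t→∞} (1/G(Kt)) ∫_1^t (G(s)/s) ds = ∞; (ii) limsup_{t→∞} (1/G(t)) ∫_1^t (G(s)/s) ds = ∞; (iii) for every K≥1, liminf_{t→∞} G(Kt)/G(t) = 1. -/

import Mathlib

open MeasureTheory Filter Set Real Topology

noncomputable section

lemma myIntble (G : ℝ → ℝ) (hGcont : ContinuousOn G (Set.Ioi 0))
    {a b : ℝ} (ha : 0 < a) (hab : a ≤ b) :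
    IntervalIntegrable (fun s => G s / s) volume a b := by
  apply ContinuousOn.intervalIntegrable
  rw [uIcc_of_le hab]
  exact ContinuousOn.div
    (hGcont.mono (fun x hx => lt_of_lt_of_le ha hx.1))
    continuousOn_id
    (fun x hx => ne_of_gt (lt_of_lt_of_le ha hx.1))

lemma myConstInt {a b c : ℝ} (ha : 0 < a) (hab : a ≤ b) :
    ∫ s in a..b, c / s = c * (Real.log b - Real.log a) := by
  have h0 : (0:ℝ) ∉ uIcc a b := by
    rw [uIcc_of_le hab]
    intro h; exact absurd h.1 (not_le.mpr ha)
  have : ∫ s in a..b, c * (1 / s) = c * ∫ s in a..b, 1 / s :=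
    intervalIntegral.integral_const_mul c _
  simp only [mul_one_div] at this
  have hb : (0:ℝ) < b := lt_of_lt_of_le ha hab
  rw [this, integral_one_div h0, Real.log_div (ne_of_gt hb) (ne_of_gt ha)]

lemma myConstIntble {a b c : ℝ} (ha : 0 < a) (hab : a ≤ b) :
    IntervalIntegrable (fun s => c / s) volume a b := by
  apply ContinuousOn.intervalIntegrable
  rw [uIcc_of_le hab]
  exact ContinuousOn.div continuousOn_const continuousOn_id
    (fun x hx => ne_of_gt (lt_of_lt_of_le ha hx.1))

lemma myUB (G : ℝ → ℝ) (hGcont : ContinuousOn G (Set.Ioi 0))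
    (hGmono : MonotoneOn G (Set.Ioi 0))
    {a b : ℝ} (ha : 0 < a) (hab : a ≤ b) :
    ∫ s in a..b, G s / s ≤ G b * (Real.log b - Real.log a) := by
  rw [← myConstInt (c := G b) ha hab]
  apply intervalIntegral.integral_mono_on hab (myIntble G hGcont ha hab)
    (myConstIntble ha hab)
  intro x hx
  have hx0 : (0:ℝ) < x := lt_of_lt_of_le ha hx.1
  have hgb : G x ≤ G b := hGmono hx0 (lt_of_lt_of_le ha hab) hx.2
  gcongr

lemma myLB (G : ℝ → ℝ) (hGcont : ContinuousOn G (Set.Ioi 0))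
    (hGmono : MonotoneOn G (Set.Ioi 0))
    {a b : ℝ} (ha : 0 < a) (hab : a ≤ b) :
    G a * (Real.log b - Real.log a) ≤ ∫ s in a..b, G s / s := by
  rw [← myConstInt (c := G a) ha hab]
  apply intervalIntegral.integral_mono_on hab (myConstIntble ha hab)
    (myIntble G hGcont ha hab)
  intro x hx
  have hx0 : (0:ℝ) < x := lt_of_lt_of_le ha hx.1
  have hga : G a ≤ G x := hGmono ha hx0 hx.1
  gcongr

lemma myIooEq (G : ℝ → ℝ) {a b : ℝ} (hab : a ≤ b) :
    ∫ s in Set.Ioo a b, G s / s = ∫ s in a..b, G s / s := by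
  rw [intervalIntegral.integral_of_le hab, integral_Ioc_eq_integral_Ioo]

lemma myNonneg (G : ℝ → ℝ) (hGpos : ∀ t : ℝ, 0 < t → 0 < G t) (t : ℝ) :
    0 ≤ ∫ s in Set.Ioo (1:ℝ) t, G s / s := by
  apply setIntegral_nonneg measurableSet_Ioo
  intro x hx
  have hx0 : (0:ℝ) < x := lt_trans one_pos hx.1
  exact div_nonneg (hGpos x hx0).le hx0.le

lemma myDelta2 (G : ℝ → ℝ) (hGpos : ∀ t : ℝ, 0 < t → 0 < G t)
    (hGmono : MonotoneOn G (Set.Ioi 0))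
    (hΔ2 : ∃ K₀ T : ℝ, 0 < K₀ ∧ 0 ≤ T ∧ ∀ t : ℝ, T ≤ t → 0 < t → G (2 * t) ≤ K₀ * G t) :
    ∃ T₁ : ℝ, 1 ≤ T₁ ∧ ∀ K : ℝ, 1 ≤ K → ∃ C : ℝ, 1 ≤ C ∧
      ∀ t : ℝ, T₁ ≤ t → G (K * t) ≤ C * G t := by
  obtain ⟨K₀, T, hK₀, hT, hd⟩ := hΔ2
  refine ⟨max T 1, le_max_right _ _, fun K hK => ?_⟩
  set C₀ := max K₀ 1 with hC₀
  have hC₀1 : 1 ≤ C₀ := le_max_right _ _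
  have key : ∀ n : ℕ, ∀ t : ℝ, max T 1 ≤ t → G (2 ^ n * t) ≤ C₀ ^ n * G t := by
    intro n
    induction n with
    | zero => intro t ht; simp
    | succ n ih =>
      intro t ht
      have ht1 : (1:ℝ) ≤ t := le_trans (le_max_right _ _) ht
      have ht0 : (0:ℝ) < t := lt_of_lt_of_le one_pos ht1
      have h2n : (1:ℝ) ≤ 2 ^ n := one_le_pow₀ (by norm_num)
      have h2nt : max T 1 ≤ 2 ^ n * t := le_trans ht (le_mul_of_one_le_left ht0.le h2n)
      have h2nt0 : (0:ℝ) < 2 ^ n * t := by positivity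
      have := hd (2 ^ n * t) (le_trans (le_max_left _ _) h2nt) h2nt0
      calc G (2 ^ (n+1) * t) = G (2 * (2 ^ n * t)) := by ring_nf
        _ ≤ K₀ * G (2 ^ n * t) := this
        _ ≤ C₀ * (C₀ ^ n * G t) := by
            apply mul_le_mul (le_max_left _ _) (ih t ht)
              (le_of_lt (hGpos _ h2nt0)) (le_trans zero_le_one hC₀1)
        _ = C₀ ^ (n+1) * G t := by ring
  obtain ⟨n, hn⟩ := pow_unbounded_of_one_lt K (one_lt_two (α := ℝ))
  refine ⟨C₀ ^ n, one_le_pow₀ hC₀1, fun t ht => ?_⟩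
  have ht1 : (1:ℝ) ≤ t := le_trans (le_max_right _ _) ht
  have ht0 : (0:ℝ) < t := lt_of_lt_of_le one_pos ht1
  have h1 : G (K * t) ≤ G (2 ^ n * t) := by
    apply hGmono (mem_Ioi.mpr (mul_pos (lt_of_lt_of_le one_pos hK) ht0))
      (mem_Ioi.mpr (by positivity))
    exact mul_le_mul_of_nonneg_right hn.le ht0.le
  exact le_trans h1 (key n t ht)

lemma myKeyInd (G : ℝ → ℝ) (hGpos : ∀ t : ℝ, 0 < t → 0 < G t)
    (hGcont : ContinuousOn G (Set.Ioi 0))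
    (hGmono : MonotoneOn G (Set.Ioi 0))
    {K c T₁ : ℝ} (hK : 1 < K) (hc : 1 < c) (hT₁ : 1 ≤ T₁)
    (hratio : ∀ t, T₁ ≤ t → c * G t ≤ G (K * t)) :
    ∀ n : ℕ, ∀ t, T₁ ≤ t → t ≤ T₁ * K ^ n →
      ∫ s in T₁..t, G s / s ≤ (c * Real.log K / (c - 1)) * G t := by
  set D := c * Real.log K / (c - 1) with hD
  have hc0 : (0:ℝ) < c - 1 := by linarith
  have hlogK : (0:ℝ) < Real.log K := Real.log_pos hK
  have hD0 : 0 ≤ D := by positivity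
  have hlogKD : Real.log K ≤ D := by
    rw [hD, div_eq_iff (ne_of_gt hc0)] at *
    nlinarith
  have hDc : D / c + Real.log K = D := by
    field_simp [hD]
    have hDm : D * (c - 1) = c * Real.log K := by
      rw [hD]; exact div_mul_cancel₀ _ (ne_of_gt hc0)
    linear_combination -hDm
  have hT₁0 : (0:ℝ) < T₁ := lt_of_lt_of_le one_pos hT₁
  have hK0 : (0:ℝ) < K := lt_trans one_pos hK
  intro n
  induction n with
  | zero =>
    intro t ht ht'
    simp only [pow_zero, mul_one] at ht'
    have : t = T₁ := le_antisymm ht' ht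
    rw [this, intervalIntegral.integral_same]
    exact mul_nonneg hD0 (hGpos _ hT₁0).le
  | succ n ih =>
    intro t ht ht'
    have ht0 : (0:ℝ) < t := lt_of_lt_of_le hT₁0 ht
    by_cases hcase : t ≤ T₁ * K ^ n
    · exact ih t ht hcase
    push_neg at hcase
    by_cases h2 : T₁ ≤ t / K
    · -- split integral at t/K
      have htK0 : (0:ℝ) < t / K := lt_of_lt_of_le hT₁0 h2
      have htKt : t / K ≤ t := by
        rw [div_le_iff₀ hK0]
        exact le_mul_of_one_le_right ht0.le hK.le
      have hsplit : (∫ s in T₁..(t/K), G s / s) + ∫ s in (t/K)..t, G s / s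
          = ∫ s in T₁..t, G s / s :=
        intervalIntegral.integral_add_adjacent_intervals
          (myIntble G hGcont hT₁0 h2) (myIntble G hGcont htK0 htKt)
      have hIH : ∫ s in T₁..(t/K), G s / s ≤ D * G (t / K) := by
        apply ih _ h2
        rw [div_le_iff₀ hK0]
        calc t ≤ T₁ * K ^ (n+1) := ht'
          _ = T₁ * K ^ n * K := by ring
      have hGtK : G (t / K) ≤ G t / c := by
        have := hratio (t / K) h2
        rw [mul_div_cancel₀ t (ne_of_gt hK0)] at this
        rw [le_div_iff₀ (by linarith : (0:ℝ) < c)]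
        linarith [this]
      have hsecond : ∫ s in (t/K)..t, G s / s ≤ G t * Real.log K := by
        have := myUB G hGcont hGmono htK0 htKt
        have hlog : Real.log t - Real.log (t / K) = Real.log K := by
          rw [Real.log_div (ne_of_gt ht0) (ne_of_gt hK0)]
          ring
        rw [hlog] at this
        exact this
      calc ∫ s in T₁..t, G s / s
          = (∫ s in T₁..(t/K), G s / s) + ∫ s in (t/K)..t, G s / s := hsplit.symm
        _ ≤ D * G (t / K) + G t * Real.log K := add_le_add hIH hsecond
        _ ≤ D * (G t / c) + G t * Real.log K := by
            exact add_le_add_left (mul_le_mul_of_nonneg_left hGtK hD0) _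
        _ = (D / c + Real.log K) * G t := by ring
        _ = D * G t := by rw [hDc]
    · -- t < K * T₁ : direct bound
      push_neg at h2
      have htlt : t < T₁ * K := by
        rw [div_lt_iff₀ hK0] at h2
        linarith [h2]
      have := myUB G hGcont hGmono hT₁0 ht
      have hlog : Real.log t - Real.log T₁ ≤ Real.log K := by
        have h1 : Real.log t ≤ Real.log (T₁ * K) :=
          Real.log_le_log ht0 htlt.le
        rw [Real.log_mul (ne_of_gt hT₁0) (ne_of_gt hK0)] at h1
        linarith
      calc ∫ s in T₁..t, G s / s ≤ G t * (Real.log t - Real.log T₁) := this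
        _ ≤ G t * Real.log K := mul_le_mul_of_nonneg_left hlog (hGpos _ ht0).le
        _ ≤ D * G t := by
            rw [mul_comm]
            exact mul_le_mul_of_nonneg_right hlogKD (hGpos _ ht0).le

theorem statement15 (G : ℝ → ℝ)
    (hGpos : ∀ t : ℝ, 0 < t → 0 < G t)
    (hGcont : ContinuousOn G (Set.Ioi 0))
    (hGmono : MonotoneOn G (Set.Ioi 0))
    (hΔ2 : ∃ K₀ T : ℝ, 0 < K₀ ∧ 0 ≤ T ∧ ∀ t : ℝ, T ≤ t → 0 < t → G (2 * t) ≤ K₀ * G t) :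
    -- (i) ↔ (ii)
    ((∀ K : ℝ, 1 ≤ K → ∀ M : ℝ, ∃ᶠ t in Filter.atTop,
        M ≤ (1 / G (K * t)) * ∫ s in Set.Ioo (1:ℝ) t, G s / s) ↔
      (∀ M : ℝ, ∃ᶠ t in Filter.atTop,
        M ≤ (1 / G t) * ∫ s in Set.Ioo (1:ℝ) t, G s / s)) ∧
    -- (ii) ↔ (iii)
    ((∀ M : ℝ, ∃ᶠ t in Filter.atTop,
        M ≤ (1 / G t) * ∫ s in Set.Ioo (1:ℝ) t, G s / s) ↔
      (∀ K : ℝ, 1 ≤ K →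
        Filter.liminf (fun t => G (K * t) / G t) Filter.atTop = 1)) := by
  obtain ⟨T₁, hT₁, hIter⟩ := myDelta2 G hGpos hGmono hΔ2
  have hT₁0 : (0:ℝ) < T₁ := lt_of_lt_of_le one_pos hT₁
  constructor
  · -- (i) ↔ (ii)
    constructor
    · intro h M
      have := h 1 le_rfl M
      simpa only [one_mul] using this
    · intro h K hK M
      obtain ⟨C, hC, hCK⟩ := hIter K hK
      have hC0 : (0:ℝ) < C := lt_of_lt_of_le one_pos hC
      refine ((h (M * C)).and_eventually (eventually_ge_atTop T₁)).mono ?_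
      rintro t ⟨hM, ht⟩
      have ht0 : (0:ℝ) < t := lt_of_lt_of_le hT₁0 ht
      have hKt0 : (0:ℝ) < K * t := mul_pos (lt_of_lt_of_le one_pos hK) ht0
      have hGKt : (0:ℝ) < G (K * t) := hGpos _ hKt0
      have hGt : (0:ℝ) < G t := hGpos _ ht0
      have hI : (0:ℝ) ≤ ∫ s in Set.Ioo (1:ℝ) t, G s / s := myNonneg G hGpos t
      have h1 : 1 / (C * G t) ≤ 1 / G (K * t) :=
        one_div_le_one_div_of_le hGKt (hCK t ht)
      calc M = (1 / C) * (M * C) := by field_simp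
        _ ≤ (1 / C) * ((1 / G t) * ∫ s in Set.Ioo (1:ℝ) t, G s / s) := by
            apply mul_le_mul_of_nonneg_left hM (by positivity)
        _ = (1 / (C * G t)) * ∫ s in Set.Ioo (1:ℝ) t, G s / s := by
            rw [← mul_assoc, one_div_mul_one_div]
        _ ≤ (1 / G (K * t)) * ∫ s in Set.Ioo (1:ℝ) t, G s / s :=
            mul_le_mul_of_nonneg_right h1 hI
  · constructor
    · -- (ii) → (iii)
      intro hii K hK
      rcases eq_or_lt_of_le hK with heq | hKgt
      · have hone : ∀ᶠ t in atTop, G (K * t) / G t = (1:ℝ) := by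
          refine (eventually_gt_atTop 0).mono fun t ht => ?_
          rw [← heq, one_mul, div_self (ne_of_gt (hGpos t ht))]
        rw [liminf_congr hone, liminf_const]
      obtain ⟨C, hC, hCK⟩ := hIter K hK
      have hub : ∀ᶠ t in atTop, G (K * t) / G t ≤ C := by
        refine (eventually_ge_atTop T₁).mono fun t ht => ?_
        have ht0 : (0:ℝ) < t := lt_of_lt_of_le hT₁0 ht
        rw [div_le_iff₀ (hGpos t ht0)]
        calc G (K * t) ≤ C * G t := hCK t ht
          _ = C * G t := rfl
      have hlb : ∀ᶠ t in atTop, (1:ℝ) ≤ G (K * t) / G t := by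
        refine (eventually_ge_atTop T₁).mono fun t ht => ?_
        have ht0 : (0:ℝ) < t := lt_of_lt_of_le hT₁0 ht
        have hle : G t ≤ G (K * t) := by
          apply hGmono (mem_Ioi.mpr ht0)
            (mem_Ioi.mpr (mul_pos (lt_of_lt_of_le one_pos hK) ht0))
          exact le_mul_of_one_le_left ht0.le hK
        exact (one_le_div (hGpos t ht0)).mpr hle
      have hbddle := isBoundedUnder_of_eventually_le hub
      have hbddge := isBoundedUnder_of_eventually_ge hlb
      have h1le : (1:ℝ) ≤ liminf (fun t => G (K * t) / G t) atTop :=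
        le_liminf_of_le hbddle.isCoboundedUnder_ge hlb
      refine le_antisymm ?_ h1le
      by_contra hlt
      push_neg at hlt
      obtain ⟨c, hc1, hcl⟩ := exists_between hlt
      have hev : ∀ᶠ t in atTop, c < G (K * t) / G t :=
        eventually_lt_of_lt_liminf hcl hbddge
      obtain ⟨T₂', hT₂'⟩ := eventually_atTop.mp hev
      set T₂ := max T₂' T₁ with hT₂def
      have hT₂1 : (1:ℝ) ≤ T₂ := le_trans hT₁ (le_max_right _ _)
      have hT₂0 : (0:ℝ) < T₂ := lt_of_lt_of_le one_pos hT₂1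
      have hratio : ∀ t, T₂ ≤ t → c * G t ≤ G (K * t) := by
        intro t ht
        have ht0 : (0:ℝ) < t := lt_of_lt_of_le hT₂0 ht
        have := hT₂' t (le_trans (le_max_left _ _) ht)
        rw [lt_div_iff₀ (hGpos t ht0)] at this
        exact this.le
      set D := c * Real.log K / (c - 1) with hDdef
      have hD0 : (0:ℝ) ≤ D := by
        have := Real.log_pos hKgt
        have hc0 : (0:ℝ) < c - 1 := by linarith
        positivity
      set B := ∫ s in (1:ℝ)..T₂, G s / s with hBdef
      have hB : (0:ℝ) ≤ B := by
        rw [hBdef, ← myIooEq G hT₂1]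
        exact myNonneg G hGpos T₂
      have hGT₂ : (0:ℝ) < G T₂ := hGpos _ hT₂0
      have hbound : ∀ᶠ t in atTop,
          (1 / G t) * (∫ s in Set.Ioo (1:ℝ) t, G s / s) ≤ B / G T₂ + D := by
        refine (eventually_ge_atTop T₂).mono fun t ht => ?_
        have ht0 : (0:ℝ) < t := lt_of_lt_of_le hT₂0 ht
        have ht1 : (1:ℝ) ≤ t := le_trans hT₂1 ht
        have hGt : (0:ℝ) < G t := hGpos _ ht0
        obtain ⟨n, hn⟩ := pow_unbounded_of_one_lt (t / T₂) hKgt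
        have htn : t ≤ T₂ * K ^ n := by
          rw [div_lt_iff₀ hT₂0] at hn
          linarith [hn]
        have hkey := myKeyInd G hGpos hGcont hGmono hKgt hc1 hT₂1 hratio n t ht htn
        have hsplit : B + ∫ s in T₂..t, G s / s = ∫ s in (1:ℝ)..t, G s / s :=
          intervalIntegral.integral_add_adjacent_intervals
            (myIntble G hGcont one_pos hT₂1) (myIntble G hGcont hT₂0 ht)
        have hIle : (∫ s in Set.Ioo (1:ℝ) t, G s / s) ≤ B + D * G t := by
          rw [myIooEq G ht1, ← hsplit]
          linarith [hkey]
        have hGtT : G T₂ ≤ G t := hGmono (mem_Ioi.mpr hT₂0) (mem_Ioi.mpr ht0) ht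
        calc (1 / G t) * (∫ s in Set.Ioo (1:ℝ) t, G s / s)
            ≤ (1 / G t) * (B + D * G t) := by
              apply mul_le_mul_of_nonneg_left hIle (by positivity)
          _ = B / G t + D := by field_simp
          _ ≤ B / G T₂ + D := by
              have h : B / G t ≤ B / G T₂ := div_le_div_of_nonneg_left hB hGT₂ hGtT
              linarith
      have hfreq := hii (B / G T₂ + D + 1)
      obtain ⟨t, hMt, hble⟩ := (hfreq.and_eventually hbound).exists
      linarith
    · -- (iii) → (ii)
      intro hiii M
      set M' := max M 1 with hM'def
      have hM'1 : (1:ℝ) ≤ M' := le_max_right _ _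
      set K := Real.exp (2 * M') with hKdef
      have hK1 : (1:ℝ) < K := by
        rw [hKdef, ← Real.exp_zero]
        exact Real.exp_lt_exp.mpr (by linarith)
      have hlogK : Real.log K = 2 * M' := Real.log_exp _
      have hlim := hiii K hK1.le
      obtain ⟨C, hC, hCK⟩ := hIter K hK1.le
      have hub : ∀ᶠ t in atTop, G (K * t) / G t ≤ C := by
        refine (eventually_ge_atTop T₁).mono fun t ht => ?_
        have ht0 : (0:ℝ) < t := lt_of_lt_of_le hT₁0 ht
        rw [div_le_iff₀ (hGpos t ht0)]
        calc G (K * t) ≤ C * G t := hCK t ht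
          _ = C * G t := rfl
      have hfreq : ∃ᶠ t in atTop, G (K * t) / G t < 2 :=
        frequently_lt_of_liminf_lt
          (isBoundedUnder_of_eventually_le hub).isCoboundedUnder_ge
          (by rw [hlim]; norm_num)
      have hmul : Tendsto (fun t : ℝ => K * t) atTop atTop :=
        Tendsto.const_mul_atTop (by linarith) tendsto_id
      apply hmul.frequently
      refine (hfreq.and_eventually (eventually_ge_atTop 1)).mono ?_
      rintro t ⟨hf2, ht1⟩
      have ht0 : (0:ℝ) < t := lt_of_lt_of_le one_pos ht1
      have hKt0 : (0:ℝ) < K * t := mul_pos (by linarith) ht0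
      have hKt1 : (1:ℝ) ≤ K * t := le_trans ht1 (le_mul_of_one_le_left ht0.le hK1.le)
      have htKt : t ≤ K * t := le_mul_of_one_le_left ht0.le hK1.le
      have hGt : (0:ℝ) < G t := hGpos _ ht0
      have hGKt : (0:ℝ) < G (K * t) := hGpos _ hKt0
      have hG2 : G (K * t) ≤ 2 * G t := by
        rw [div_lt_iff₀ hGt] at hf2
        linarith
      have hsplit : (∫ s in (1:ℝ)..t, G s / s) + ∫ s in t..(K*t), G s / s
          = ∫ s in (1:ℝ)..(K*t), G s / s :=
        intervalIntegral.integral_add_adjacent_intervals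
          (myIntble G hGcont one_pos ht1) (myIntble G hGcont ht0 htKt)
      have hfirst : (0:ℝ) ≤ ∫ s in (1:ℝ)..t, G s / s := by
        rw [← myIooEq G ht1]; exact myNonneg G hGpos t
      have hlog : Real.log (K * t) - Real.log t = Real.log K := by
        rw [Real.log_mul (by linarith) (ne_of_gt ht0)]; ring
      have hsecond : G t * Real.log K ≤ ∫ s in t..(K*t), G s / s := by
        have := myLB G hGcont hGmono ht0 htKt
        rw [hlog] at this
        exact this
      have hIlb : G (K * t) * M' ≤ ∫ s in Set.Ioo (1:ℝ) (K*t), G s / s := by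
        rw [myIooEq G hKt1, ← hsplit]
        have h1 : G (K * t) * M' ≤ G t * Real.log K := by
          rw [hlogK]
          nlinarith
        linarith
      calc M ≤ M' := le_max_left _ _
        _ = (1 / G (K * t)) * (G (K * t) * M') := by field_simp
        _ ≤ (1 / G (K * t)) * ∫ s in Set.Ioo (1:ℝ) (K*t), G s / s := by
            apply mul_le_mul_of_nonneg_left hIlb (by positivity)
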